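/- Let M ≥ 2 be even, α = M - 1, Z ~ N(0,1), and let S₀ be uniform on the M-PAM constellation {±1, ±3, ..., ±(M-1)}. Define Ψ^PAM(σ²) = E_{S₀,Z}[(F^α(S₀ + σZ) - S₀)²], where F^α is projection onto [-α,α]. Then for all σ² > 0, dΨ^PAM/dσ² ≤ 1 - 1/M, with the supremum 1 - 1/M attained in the limit σ² → 0⁺. -/

import Mathlib

open ProbabilityTheory MeasureTheory

namespace Stmt11Aux

open Real Filter Set Asymptotics

noncomputable def phi (x : ℝ) : ℝ := (Real.sqrt (2 * Real.pi))⁻¹ * Real.exp (-x ^ 2 / 2)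

lemma phi_nonneg (x : ℝ) : 0 ≤ phi x := by unfold phi; positivity

lemma phi_even (x : ℝ) : phi (-x) = phi x := by unfold phi; ring_nf

lemma pdf_eq_phi (x : ℝ) : gaussianPDFReal 0 1 x = phi x := by
  simp [gaussianPDFReal, phi]

lemma measurable_phi : Measurable phi := by
  have := measurable_gaussianPDFReal 0 1
  rwa [funext pdf_eq_phi] at this

lemma continuous_phi : Continuous phi := by
  unfold phi; fun_prop

lemma integrable_phi : Integrable phi := by
  have := integrable_gaussianPDFReal 0 1
  rwa [funext pdf_eq_phi] at this

lemma integral_phi : ∫ z, phi z = 1 := by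
  have := integral_gaussianPDFReal_eq_one 0 (v := 1) one_ne_zero
  rwa [funext pdf_eq_phi] at this

lemma integrable_sq_phi : Integrable (fun z => z ^ 2 * phi z) := by
  have h := integrable_rpow_mul_exp_neg_mul_sq (b := 2⁻¹) (by norm_num) (s := (2:ℝ)) (by norm_num)
  have e : (fun z : ℝ => z ^ (2:ℝ) * Real.exp (-2⁻¹ * z ^ 2))
      = fun z : ℝ => z ^ 2 * Real.exp (-2⁻¹ * z ^ 2) := by
    funext z
    rw [show ((2:ℝ)) = ((2:ℕ):ℝ) by norm_num, Real.rpow_natCast]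
  rw [e] at h
  have e2 : (fun z : ℝ => z ^ 2 * phi z)
      = fun z => (Real.sqrt (2 * Real.pi))⁻¹ * (z ^ 2 * Real.exp (-2⁻¹ * z ^ 2)) := by
    funext z; unfold phi; ring_nf
  rw [e2]
  exact h.const_mul _

lemma integral_gauss_eq (f : ℝ → ℝ) :
    ∫ z, f z ∂(gaussianReal 0 1) = ∫ z, phi z * f z := by
  rw [gaussianReal_of_var_ne_zero _ one_ne_zero]
  have h1 : gaussianPDF 0 1 = fun x => (((phi x).toNNReal : NNReal) : ENNReal) := by
    funext x
    rw [gaussianPDF, pdf_eq_phi, ENNReal.ofReal]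
  rw [h1, integral_withDensity_eq_integral_smul (measurable_phi.real_toNNReal)]
  congr 1
  funext x
  rw [NNReal.smul_def, Real.coe_toNNReal _ (phi_nonneg x)]
  simp

lemma hasDerivAt_phi (x : ℝ) : HasDerivAt phi (-x * phi x) x := by
  have h : HasDerivAt (fun x : ℝ => -x ^ 2 / 2) (-x) x := by
    have := ((hasDerivAt_pow 2 x).neg).div_const 2
    refine this.congr_deriv ?_
    push_cast; ring
  have h2 := (h.exp).const_mul (Real.sqrt (2 * Real.pi))⁻¹
  unfold phi
  refine h2.congr_deriv ?_
  ring

noncomputable def Phi (x : ℝ) : ℝ := ∫ z in Iic x, phi z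

lemma Phi_eq (x : ℝ) : Phi x = Phi 0 + ∫ z in (0:ℝ)..x, phi z := by
  rw [← intervalIntegral.integral_Iic_sub_Iic integrable_phi.integrableOn
      integrable_phi.integrableOn]
  unfold Phi; ring

lemma hasDerivAt_Phi (x : ℝ) : HasDerivAt Phi (phi x) x := by
  have h : HasDerivAt (fun y => ∫ z in (0:ℝ)..y, phi z) (phi x) x :=
    intervalIntegral.integral_hasDerivAt_right integrable_phi.intervalIntegrable
      measurable_phi.aestronglyMeasurable.stronglyMeasurableAtFilter
      continuous_phi.continuousAt
  have e : Phi = fun y => Phi 0 + ∫ z in (0:ℝ)..y, phi z := funext Phi_eq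
  rw [e]
  exact h.const_add (Phi 0)

noncomputable def Egau (x : ℝ) : ℝ := Phi x - x * phi x

lemma hasDerivAt_Egau (x : ℝ) : HasDerivAt Egau (x ^ 2 * phi x) x := by
  have h := (hasDerivAt_Phi x).sub ((hasDerivAt_id x).mul (hasDerivAt_phi x))
  refine h.congr_deriv ?_
  simp only [id]
  ring

lemma Phi_nonneg (x : ℝ) : 0 ≤ Phi x :=
  setIntegral_nonneg measurableSet_Iic fun z _ => phi_nonneg z

lemma Phi_le_one (x : ℝ) : Phi x ≤ 1 := by
  rw [← integral_phi]
  exact setIntegral_le_integral integrable_phi (ae_of_all _ phi_nonneg)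

lemma integral_Ioi_phi (x : ℝ) : ∫ z in Ioi x, phi z = 1 - Phi x := by
  have h := setIntegral_union (f := phi) (μ := volume) (Iic_disjoint_Ioi (le_refl x))
    measurableSet_Ioi integrable_phi.integrableOn integrable_phi.integrableOn
  rw [Iic_union_Ioi, setIntegral_univ, integral_phi] at h
  unfold Phi; linarith

lemma Phi_zero : Phi 0 = 1 / 2 := by
  have h : ∫ x in Iic (0:ℝ), phi (-x) = ∫ x in Ioi (-(0:ℝ)), phi x := integral_comp_neg_Iic 0 phi
  simp only [neg_zero] at h
  rw [integral_Ioi_phi] at h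
  have h2 : ∫ x in Iic (0:ℝ), phi (-x) = Phi 0 := by
    unfold Phi
    exact setIntegral_congr_fun measurableSet_Iic fun x _ => phi_even x
  linarith [h2 ▸ h]

lemma tendsto_Phi_atTop : Tendsto Phi atTop (nhds 1) := by
  have h := tendsto_measure_Iic_atTop (gaussianReal 0 1)
  rw [(measure_univ : (gaussianReal 0 1) univ = 1)] at h
  have h2 : Tendsto (fun x => ((gaussianReal 0 1) (Iic x)).toReal) atTop (nhds 1) := by
    have := (ENNReal.tendsto_toReal (by norm_num : (1:ENNReal) ≠ ⊤)).comp h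
    exact this
  refine h2.congr fun x => ?_
  rw [gaussianReal_apply_eq_integral 0 one_ne_zero, ENNReal.toReal_ofReal]
  · unfold Phi
    congr 1
    exact funext pdf_eq_phi
  · exact setIntegral_nonneg measurableSet_Iic fun z _ => (pdf_eq_phi z) ▸ phi_nonneg z

lemma tendsto_Phi_atBot : Tendsto Phi atBot (nhds 0) := by
  have h := tendsto_measure_Ici_atBot (gaussianReal 0 1)
  rw [(measure_univ : (gaussianReal 0 1) univ = 1)] at h
  have h2 : Tendsto (fun x => ((gaussianReal 0 1) (Ici x)).toReal) atBot (nhds 1) := by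
    have := (ENNReal.tendsto_toReal (by norm_num : (1:ENNReal) ≠ ⊤)).comp h
    exact this
  have h3 : Tendsto (fun x => 1 - ((gaussianReal 0 1) (Ici x)).toReal) atBot (nhds 0) := by
    have := (tendsto_const_nhds (x := (1:ℝ)) (f := atBot)).sub h2
    simpa using this
  refine h3.congr fun x => ?_
  have hIci : ((gaussianReal 0 1) (Ici x)).toReal = ∫ z in Ici x, phi z := by
    rw [gaussianReal_apply_eq_integral 0 one_ne_zero, ENNReal.toReal_ofReal]
    · congr 1; exact funext pdf_eq_phi
    · exact setIntegral_nonneg measurableSet_Ici fun z _ => (pdf_eq_phi z) ▸ phi_nonneg z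
  have hIoi : ∫ z in Ici x, phi z = ∫ z in Ioi x, phi z :=
    (setIntegral_congr_set (Ioi_ae_eq_Ici (μ := volume))).symm
  rw [hIci, hIoi, integral_Ioi_phi]
  ring

lemma tendsto_mul_phi_atTop : Tendsto (fun x => x * phi x) atTop (nhds 0) := by
  have ho := rpow_mul_exp_neg_mul_sq_isLittleO_exp_neg (b := 2⁻¹) (by norm_num) 1
  have hg : Tendsto (fun x : ℝ => Real.exp (-(1/2) * x)) atTop (nhds 0) := by
    apply Real.tendsto_exp_atBot.comp
    exact Tendsto.const_mul_atTop_of_neg (by norm_num : (-(1/2):ℝ) < 0) tendsto_id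
  have h0 : Tendsto (fun x : ℝ => x ^ (1:ℝ) * Real.exp (-2⁻¹ * x ^ 2)) atTop (nhds 0) :=
    ho.isBigO.trans_tendsto hg
  have h1 : Tendsto (fun x : ℝ => (Real.sqrt (2 * Real.pi))⁻¹ *
      (x ^ (1:ℝ) * Real.exp (-2⁻¹ * x ^ 2))) atTop (nhds 0) := by
    have := h0.const_mul (Real.sqrt (2 * Real.pi))⁻¹
    simpa using this
  refine h1.congr fun x => ?_
  rw [Real.rpow_one]
  unfold phi
  ring_nf

lemma tendsto_mul_phi_atBot : Tendsto (fun x => x * phi x) atBot (nhds 0) := by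
  have h := (tendsto_mul_phi_atTop.comp tendsto_neg_atBot_atTop).neg
  simp only [Function.comp] at h
  rw [neg_zero] at h
  refine h.congr fun x => ?_
  rw [phi_even]
  ring

lemma tendsto_Egau_atTop : Tendsto Egau atTop (nhds 1) := by
  have := tendsto_Phi_atTop.sub tendsto_mul_phi_atTop
  rw [sub_zero] at this
  exact this

lemma tendsto_Egau_atBot : Tendsto Egau atBot (nhds 0) := by
  have := tendsto_Phi_atBot.sub tendsto_mul_phi_atBot
  rw [sub_zero] at this
  exact this

lemma Egau_zero : Egau 0 = 1 / 2 := by unfold Egau; rw [Phi_zero]; ring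

lemma Egau_le_one {x : ℝ} (hx : 0 ≤ x) : Egau x ≤ 1 := by
  have := mul_nonneg hx (phi_nonneg x)
  have := Phi_le_one x
  unfold Egau; linarith

lemma Egau_nonneg {x : ℝ} (hx : x ≤ 0) : 0 ≤ Egau x := by
  have := mul_nonpos_of_nonpos_of_nonneg hx (phi_nonneg x)
  have := Phi_nonneg x
  unfold Egau; linarith

noncomputable def G (α s v : ℝ) : ℝ :=
  (α + s) ^ 2 * Phi ((-α - s) / Real.sqrt v)
    + v * (Egau ((α - s) / Real.sqrt v) - Egau ((-α - s) / Real.sqrt v))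
    + (α - s) ^ 2 * (1 - Phi ((α - s) / Real.sqrt v))

noncomputable def D (α s v : ℝ) : ℝ :=
  Egau ((α - s) / Real.sqrt v) - Egau ((-α - s) / Real.sqrt v)

lemma integral_eq_G (α s : ℝ) (hα : 0 < α) (hs1 : -α ≤ s) (hs2 : s ≤ α) {v : ℝ} (hv : 0 < v) :
    (∫ z, (max (-α) (min α (s + Real.sqrt v * z)) - s) ^ 2 ∂(gaussianReal 0 1)) = G α s v := by
  have hσ : 0 < Real.sqrt v := Real.sqrt_pos.mpr hv
  set σ := Real.sqrt v with hσdef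
  have hσ2 : σ ^ 2 = v := Real.sq_sqrt hv.le
  set a := (-α - s) / σ with ha
  set b := (α - s) / σ with hb
  have hσa : σ * a = -α - s := by rw [ha]; field_simp
  have hσb : σ * b = α - s := by rw [hb]; field_simp
  have hab : a ≤ b := by
    rw [ha, hb]
    exact (div_le_div_iff_of_pos_right hσ).mpr (by linarith)
  rw [integral_gauss_eq]
  set F : ℝ → ℝ := fun z => phi z * (max (-α) (min α (s + σ * z)) - s) ^ 2 with hF
  have key1 : ∀ z ∈ Iic a, F z = phi z * (α + s) ^ 2 := by
    intro z hz
    have h1 : σ * z ≤ σ * a := mul_le_mul_of_nonneg_left hz hσ.le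
    rw [hσa] at h1
    rw [hF]
    simp only
    rw [min_eq_right (by linarith), max_eq_left (by linarith)]
    ring
  have key2 : ∀ z ∈ Ioc a b, F z = v * (z ^ 2 * phi z) := by
    intro z hz
    have h1 : σ * a < σ * z := (mul_lt_mul_iff_right₀ hσ).mpr hz.1
    have h2 : σ * z ≤ σ * b := mul_le_mul_of_nonneg_left hz.2 hσ.le
    rw [hσa] at h1; rw [hσb] at h2
    rw [hF]
    simp only
    rw [min_eq_right (by linarith), max_eq_right (by linarith)]
    have : (s + σ * z - s) ^ 2 = σ ^ 2 * z ^ 2 := by ring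
    rw [this, hσ2]
    ring
  have key3 : ∀ z ∈ Ioi b, F z = phi z * (α - s) ^ 2 := by
    intro z hz
    have h1 : σ * b < σ * z := (mul_lt_mul_iff_right₀ hσ).mpr hz
    rw [hσb] at h1
    rw [hF]
    simp only
    rw [min_eq_left (by linarith), max_eq_right (by linarith)]
  have intA : IntegrableOn F (Iic a) :=
    ((integrable_phi.mul_const ((α + s) ^ 2)).integrableOn).congr_fun
      (fun z hz => (key1 z hz).symm) measurableSet_Iic
  have intB : IntegrableOn F (Ioc a b) :=
    ((integrable_sq_phi.const_mul v).integrableOn).congr_fun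
      (fun z hz => (key2 z hz).symm) measurableSet_Ioc
  have intC : IntegrableOn F (Ioi b) :=
    ((integrable_phi.mul_const ((α - s) ^ 2)).integrableOn).congr_fun
      (fun z hz => (key3 z hz).symm) measurableSet_Ioi
  have intAB : IntegrableOn F (Iic b) := by
    rw [← Iic_union_Ioc_eq_Iic hab]
    exact intA.union intB
  have split1 : ∫ z, F z = (∫ z in Iic b, F z) + ∫ z in Ioi b, F z := by
    rw [← setIntegral_union (Iic_disjoint_Ioi le_rfl) measurableSet_Ioi intAB intC,
      Iic_union_Ioi, setIntegral_univ]
  have split2 : ∫ z in Iic b, F z = (∫ z in Iic a, F z) + ∫ z in Ioc a b, F z := by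
    rw [← setIntegral_union (Iic_disjoint_Ioc le_rfl) measurableSet_Ioc intA intB,
      Iic_union_Ioc_eq_Iic hab]
  have e1 : ∫ z in Iic a, F z = (α + s) ^ 2 * Phi a := by
    rw [setIntegral_congr_fun measurableSet_Iic key1, integral_mul_const]
    unfold Phi
    ring
  have e2 : ∫ z in Ioc a b, F z = v * (Egau b - Egau a) := by
    rw [setIntegral_congr_fun measurableSet_Ioc key2, MeasureTheory.integral_const_mul]
    congr 1
    rw [← intervalIntegral.integral_of_le hab]
    exact intervalIntegral.integral_eq_sub_of_hasDerivAt
      (fun t _ => hasDerivAt_Egau t) integrable_sq_phi.intervalIntegrable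
  have e3 : ∫ z in Ioi b, F z = (α - s) ^ 2 * (1 - Phi b) := by
    rw [setIntegral_congr_fun measurableSet_Ioi key3, integral_mul_const, integral_Ioi_phi]
    ring
  rw [split1, split2, e1, e2, e3]
  unfold G
  rw [← ha, ← hb]

lemma hasDerivAt_G (α s : ℝ) {v : ℝ} (hv : 0 < v) :
    HasDerivAt (G α s) (D α s v) v := by
  have hσ : 0 < Real.sqrt v := Real.sqrt_pos.mpr hv
  have hσne : Real.sqrt v ≠ 0 := hσ.ne'
  have hsq : HasDerivAt Real.sqrt (1 / (2 * Real.sqrt v)) v := Real.hasDerivAt_sqrt hv.ne'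
  have hA : HasDerivAt (fun w => (-α - s) / Real.sqrt w)
      ((0 * Real.sqrt v - (-α - s) * (1 / (2 * Real.sqrt v))) / (Real.sqrt v) ^ 2) v :=
    (hasDerivAt_const v (-α - s)).div hsq hσne
  have hB : HasDerivAt (fun w => (α - s) / Real.sqrt w)
      ((0 * Real.sqrt v - (α - s) * (1 / (2 * Real.sqrt v))) / (Real.sqrt v) ^ 2) v :=
    (hasDerivAt_const v (α - s)).div hsq hσne
  have h1 := (HasDerivAt.comp v (hasDerivAt_Phi ((-α - s) / Real.sqrt v)) hA).const_mul
    ((α + s) ^ 2)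
  have h2 := ((HasDerivAt.comp v (hasDerivAt_Egau ((α - s) / Real.sqrt v)) hB).sub
    (HasDerivAt.comp v (hasDerivAt_Egau ((-α - s) / Real.sqrt v)) hA))
  have h2' := (hasDerivAt_id v).mul h2
  have h3 := ((HasDerivAt.comp v (hasDerivAt_Phi ((α - s) / Real.sqrt v)) hB).const_sub 1).const_mul
    ((α - s) ^ 2)
  have h := (h1.add h2').add h3
  simp only [Function.comp] at h
  have hfun : G α s = fun w =>
      ((α + s) ^ 2 * Phi ((-α - s) / Real.sqrt w)
        + id w * (Egau ((α - s) / Real.sqrt w) - Egau ((-α - s) / Real.sqrt w)))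
      + (α - s) ^ 2 * (1 - Phi ((α - s) / Real.sqrt w)) := by
    funext w
    simp only [G, id]
  rw [hfun]
  refine h.congr_deriv ?_
  unfold D
  set σ := Real.sqrt v with hσdef
  have hσ2 : σ ^ 2 = v := Real.sq_sqrt hv.le
  simp only [Pi.sub_apply, Function.comp, ← hσdef]
  rw [← hσ2]
  simp only [id]
  field_simp
  ring

lemma tendsto_div_sqrt_atTop {c : ℝ} (hc : 0 < c) :
    Tendsto (fun v => c / Real.sqrt v) (nhdsWithin 0 (Ioi 0)) atTop := by
  have h1 : Tendsto Real.sqrt (nhdsWithin 0 (Ioi 0)) (nhdsWithin 0 (Ioi 0)) := by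
    apply tendsto_nhdsWithin_of_tendsto_nhds_of_eventually_within
    · have := (Real.continuous_sqrt.tendsto 0).mono_left
        (nhdsWithin_le_nhds (s := Ioi (0:ℝ)))
      simpa using this
    · filter_upwards [self_mem_nhdsWithin] with v hv
      exact Real.sqrt_pos.mpr hv
  have h2 := tendsto_inv_nhdsGT_zero.comp h1
  have h3 := h2.const_mul_atTop hc
  refine h3.congr fun v => ?_
  simp [Function.comp, div_eq_mul_inv]

lemma tendsto_div_sqrt_atBot {c : ℝ} (hc : c < 0) :
    Tendsto (fun v => c / Real.sqrt v) (nhdsWithin 0 (Ioi 0)) atBot := by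
  have h := tendsto_neg_atTop_atBot.comp (tendsto_div_sqrt_atTop (c := -c) (by linarith))
  refine h.congr fun v => ?_
  simp [Function.comp]
  ring

lemma D_tendsto_one {α s : ℝ} (h1 : -α - s < 0) (h2 : 0 < α - s) :
    Tendsto (fun v => D α s v) (nhdsWithin 0 (Ioi 0)) (nhds 1) := by
  have hb := tendsto_Egau_atTop.comp (tendsto_div_sqrt_atTop h2)
  have ha := tendsto_Egau_atBot.comp (tendsto_div_sqrt_atBot h1)
  have := hb.sub ha
  simpa [D, Function.comp] using this

lemma D_tendsto_half_left {α s : ℝ} (h1 : -α - s = 0) (h2 : 0 < α - s) :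
    Tendsto (fun v => D α s v) (nhdsWithin 0 (Ioi 0)) (nhds (1 / 2)) := by
  have hb := tendsto_Egau_atTop.comp (tendsto_div_sqrt_atTop h2)
  have : Tendsto (fun v => Egau ((α - s) / Real.sqrt v) - Egau 0)
      (nhdsWithin 0 (Ioi 0)) (nhds (1 - 1/2)) := by
    rw [Egau_zero]
    exact (hb.sub tendsto_const_nhds)
  have h' := this
  norm_num at h'
  refine h'.congr fun v => ?_
  simp [D, h1, Function.comp]

lemma D_tendsto_half_right {α s : ℝ} (h1 : -α - s < 0) (h2 : α - s = 0) :
    Tendsto (fun v => D α s v) (nhdsWithin 0 (Ioi 0)) (nhds (1 / 2)) := by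
  have ha := tendsto_Egau_atBot.comp (tendsto_div_sqrt_atBot h1)
  have : Tendsto (fun v => Egau 0 - Egau ((-α - s) / Real.sqrt v))
      (nhdsWithin 0 (Ioi 0)) (nhds (1/2 - 0)) := by
    rw [Egau_zero]
    exact tendsto_const_nhds.sub ha
  norm_num at this
  refine this.congr fun v => ?_
  simp [D, h2, Function.comp]

lemma D_le_one {α s v : ℝ} (h1 : -α - s ≤ 0) (h2 : 0 ≤ α - s) (hv : 0 < v) :
    D α s v ≤ 1 := by
  have hσ : 0 < Real.sqrt v := Real.sqrt_pos.mpr hv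
  have hb : (0:ℝ) ≤ (α - s) / Real.sqrt v := div_nonneg h2 hσ.le
  have ha : (-α - s) / Real.sqrt v ≤ 0 := div_nonpos_of_nonpos_of_nonneg h1 hσ.le
  have := Egau_le_one hb
  have := Egau_nonneg ha
  unfold D; linarith

lemma D_le_half_left {α s v : ℝ} (h1 : -α - s = 0) (h2 : 0 ≤ α - s) (hv : 0 < v) :
    D α s v ≤ 1 / 2 := by
  have hσ : 0 < Real.sqrt v := Real.sqrt_pos.mpr hv
  have hb : (0:ℝ) ≤ (α - s) / Real.sqrt v := div_nonneg h2 hσ.le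
  have := Egau_le_one hb
  unfold D
  rw [h1, zero_div, Egau_zero]
  linarith

lemma D_le_half_right {α s v : ℝ} (h1 : -α - s ≤ 0) (h2 : α - s = 0) (hv : 0 < v) :
    D α s v ≤ 1 / 2 := by
  have hσ : 0 < Real.sqrt v := Real.sqrt_pos.mpr hv
  have ha : (-α - s) / Real.sqrt v ≤ 0 := div_nonpos_of_nonpos_of_nonneg h1 hσ.le
  have := Egau_nonneg ha
  unfold D
  rw [h2, zero_div, Egau_zero]
  linarith

end Stmt11Aux

open Stmt11Aux Real Filter Set

/-- For S₀ uniform on the M-PAM constellation {±1,±3,…,±(M-1)} (M even, M ≥ 2),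
α = M-1, and Ψ^PAM(v) = E_{S₀,Z}[(F^α(S₀+√v·Z)-S₀)²], the derivative of Ψ^PAM
satisfies dΨ/dv ≤ 1 - 1/M for all v > 0, with supremum 1 - 1/M attained as v → 0⁺. -/
theorem stmt_11 (M : ℕ) (hM : 2 ≤ M) (hMeven : Even M)
    (Ψ : ℝ → ℝ)
    (hΨ : ∀ v, Ψ v = (1 / (M : ℝ)) * ∑ k ∈ Finset.range M,
      ∫ z, (max (-(M - 1) : ℝ) (min ((M : ℝ) - 1)
            ((2 * (k : ℝ) + 1 - M) + Real.sqrt v * z)) - (2 * (k : ℝ) + 1 - M)) ^ 2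
          ∂(gaussianReal 0 1)) :
    (∀ v : ℝ, 0 < v → deriv Ψ v ≤ 1 - 1 / M) ∧
    Filter.Tendsto (deriv Ψ) (nhdsWithin 0 (Set.Ioi 0)) (nhds (1 - 1 / M)) := by
  have hM1 : (1:ℕ) ≤ M := by omega
  have hMR : (2:ℝ) ≤ (M:ℝ) := by exact_mod_cast hM
  have hMne : (M:ℝ) ≠ 0 := by linarith
  have hα : 0 < (M:ℝ) - 1 := by linarith
  have hcastM1 : ((M - 1 : ℕ) : ℝ) = (M:ℝ) - 1 := by
    push_cast [Nat.cast_sub hM1]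
    ring
  have hski : ∀ k : ℕ, k ∈ Finset.range M →
      (-((M:ℝ) - 1) ≤ 2*(k:ℝ)+1-M ∧ 2*(k:ℝ)+1-M ≤ (M:ℝ)-1) := by
    intro k hk
    have hkM : k < M := Finset.mem_range.mp hk
    have h1 : (k:ℝ) + 1 ≤ M := by exact_mod_cast hkM
    have h2 : (0:ℝ) ≤ (k:ℝ) := Nat.cast_nonneg k
    constructor <;> linarith
  have hg : ∀ w ∈ Ioi (0:ℝ), Ψ w
      = (1/(M:ℝ)) * ∑ k ∈ Finset.range M, G ((M:ℝ)-1) (2*(k:ℝ)+1-M) w := by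
    intro w hw
    rw [hΨ w]
    congr 1
    refine Finset.sum_congr rfl fun k hk => ?_
    exact integral_eq_G _ _ hα (hski k hk).1 (hski k hk).2 hw
  have hDeriv : ∀ v : ℝ, 0 < v → deriv Ψ v
      = (1/(M:ℝ)) * ∑ k ∈ Finset.range M, D ((M:ℝ)-1) (2*(k:ℝ)+1-M) v := by
    intro v hv
    have hEq : (fun w => (1/(M:ℝ)) * ∑ k ∈ Finset.range M, G ((M:ℝ)-1) (2*(k:ℝ)+1-M) w)
        =ᶠ[nhds v] Ψ := by
      filter_upwards [isOpen_Ioi.mem_nhds hv] with w hw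
      exact (hg w hw).symm
    rw [← hEq.deriv_eq]
    have hder : HasDerivAt
        (fun w => (1/(M:ℝ)) * ∑ k ∈ Finset.range M, G ((M:ℝ)-1) (2*(k:ℝ)+1-M) w)
        ((1/(M:ℝ)) * ∑ k ∈ Finset.range M, D ((M:ℝ)-1) (2*(k:ℝ)+1-M) v) v := by
      apply HasDerivAt.const_mul
      exact HasDerivAt.fun_sum fun k _ => hasDerivAt_G _ _ hv
    exact hder.deriv
  set f : ℕ → ℝ := fun k => if k = 0 then 1/2 else if k = M-1 then 1/2 else 1 with hf
  have h0M : (0:ℕ) ∈ Finset.range M := by simp only [Finset.mem_range]; omega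
  have hM1M : M - 1 ∈ Finset.range M := by simp only [Finset.mem_range]; omega
  have hne01 : (0:ℕ) ≠ M - 1 := by omega
  have hsumf : ∑ k ∈ Finset.range M, f k = (M:ℝ) - 1 := by
    have step : ∀ k ∈ Finset.range M, f k
        = 1 - (if k = 0 then (1/2:ℝ) else 0) - (if k = M-1 then (1/2:ℝ) else 0) := by
      intro k _
      rw [hf]
      by_cases hk0 : k = 0
      · subst hk0
        simp [hne01]
        norm_num
      · by_cases hk1 : k = M-1
        · subst hk1
          simp [hk0]
          norm_num
        · simp [hk0, hk1]
    rw [Finset.sum_congr rfl step]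
    rw [Finset.sum_sub_distrib, Finset.sum_sub_distrib, Finset.sum_const, Finset.card_range,
      Finset.sum_ite_eq' (Finset.range M) 0 (fun _ => (1/2:ℝ)),
      Finset.sum_ite_eq' (Finset.range M) (M-1) (fun _ => (1/2:ℝ))]
    simp only [h0M, hM1M, if_pos]
    push_cast
    ring
  -- numeric facts about the boundary numerators
  have hbound : ∀ v : ℝ, 0 < v → ∀ k ∈ Finset.range M,
      D ((M:ℝ)-1) (2*(k:ℝ)+1-M) v ≤ f k := by
    intro v hv k hk
    have hkM : k < M := Finset.mem_range.mp hk
    by_cases hk0 : k = 0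
    · subst hk0
      rw [hf]
      simp only [if_pos rfl]
      apply D_le_half_left _ _ hv
      · push_cast; ring
      · push_cast; linarith
    · by_cases hk1 : k = M - 1
      · subst hk1
        rw [hf]
        simp only [if_neg (Ne.symm hne01), if_pos rfl]
        apply D_le_half_right _ _ hv
        · rw [hcastM1]
          have : (0:ℝ) ≤ (M:ℝ) - 1 := hα.le
          nlinarith [hα]
        · rw [hcastM1]; ring
      · rw [hf]
        simp only [if_neg hk0, if_neg hk1]
        apply D_le_one _ _ hv
        · have : (0:ℝ) ≤ (k:ℝ) := Nat.cast_nonneg k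
          linarith
        · have h1 : (k:ℝ) + 1 ≤ M := by exact_mod_cast hkM
          linarith
  have hDlim : ∀ k ∈ Finset.range M,
      Tendsto (fun v => D ((M:ℝ)-1) (2*(k:ℝ)+1-M) v) (nhdsWithin 0 (Ioi 0)) (nhds (f k)) := by
    intro k hk
    have hkM : k < M := Finset.mem_range.mp hk
    by_cases hk0 : k = 0
    · subst hk0
      rw [hf]
      simp only [if_pos rfl]
      apply D_tendsto_half_left
      · push_cast; ring
      · push_cast; linarith
    · by_cases hk1 : k = M - 1
      · subst hk1
        rw [hf]
        simp only [if_neg (Ne.symm hne01), if_pos rfl]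
        apply D_tendsto_half_right
        · rw [hcastM1]; nlinarith [hα]
        · rw [hcastM1]; ring
      · rw [hf]
        simp only [if_neg hk0, if_neg hk1]
        apply D_tendsto_one
        · have hk1' : (1:ℝ) ≤ (k:ℝ) := by
            have : 1 ≤ k := Nat.one_le_iff_ne_zero.mpr hk0
            exact_mod_cast this
          linarith
        · have hk2 : k + 2 ≤ M := by omega
          have : (k:ℝ) + 2 ≤ M := by exact_mod_cast hk2
          linarith
  constructor
  · intro v hv
    rw [hDeriv v hv]
    have hs := Finset.sum_le_sum (hbound v hv)
    rw [hsumf] at hs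
    have h0 : (0:ℝ) ≤ 1/(M:ℝ) := by positivity
    have := mul_le_mul_of_nonneg_left hs h0
    calc (1/(M:ℝ)) * ∑ k ∈ Finset.range M, D ((M:ℝ)-1) (2*(k:ℝ)+1-M) v
        ≤ (1/(M:ℝ)) * ((M:ℝ) - 1) := this
      _ = 1 - 1/(M:ℝ) := by field_simp
  · have hT := (tendsto_finset_sum (Finset.range M) hDlim).const_mul (1/(M:ℝ))
    rw [hsumf] at hT
    have hval : (1/(M:ℝ)) * ((M:ℝ) - 1) = 1 - 1/(M:ℝ) := by field_simp
    rw [hval] at hT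
    refine hT.congr' ?_
    filter_upwards [self_mem_nhdsWithin] with v hv
    exact (hDeriv v hv).symm
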